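/- Fix n, n_u, n_y ∈ ℕ, matrices A ∈ ℝ^{n×n}, B ∈ ℝ^{n×n_u}, C ∈ ℝ^{n_y×n}, D ∈ ℝ^{n_y×n_u}, with (A,B) controllable. Let (u^d, y^d) be a trajectory of length N of the LTI system (A,B,C,D), let 1 ≤ ℓ ≤ N, and assume u^d is persistently exciting of order ℓ + n. Then the stacked Hankel matrix [H_ℓ(u^d); H_ℓ(y^d)] ∈ ℝ^{ℓ(n_u+n_y) × (N−ℓ+1)} has rank ℓ n_u + rank(O_ℓ), where O_ℓ is the observability matrix of depth ℓ. -/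

import Mathlib

open Matrix

/-- `(u, y)` is a trajectory of length `N` of the LTI system `(A, B, C, D)`. -/
def IsTrajectory {n nu ny : ℕ} (A : Matrix (Fin n) (Fin n) ℝ) (B : Matrix (Fin n) (Fin nu) ℝ)
    (C : Matrix (Fin ny) (Fin n) ℝ) (D : Matrix (Fin ny) (Fin nu) ℝ) (N : ℕ)
    (u : ℕ → Fin nu → ℝ) (y : ℕ → Fin ny → ℝ) : Prop :=
  ∃ x : ℕ → Fin n → ℝ,
    (∀ t, t + 1 < N → x (t + 1) = A.mulVec (x t) + B.mulVec (u t)) ∧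
    (∀ t, t < N → y t = C.mulVec (x t) + D.mulVec (u t))

/-- The Hankel matrix of depth `ℓ` with `m = N - ℓ + 1` columns of a vector sequence `z`. -/
def hankel {nz : ℕ} (ℓ m : ℕ) (z : ℕ → Fin nz → ℝ) : Matrix (Fin ℓ × Fin nz) (Fin m) ℝ :=
  Matrix.of fun p j => z ((p.1 : ℕ) + (j : ℕ)) p.2

/-- The controllability matrix `[B, AB, …, A^{n-1}B]`. -/
def ctrbMat {n nu : ℕ} (A : Matrix (Fin n) (Fin n) ℝ) (B : Matrix (Fin n) (Fin nu) ℝ) :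
    Matrix (Fin n) (Fin n × Fin nu) ℝ :=
  Matrix.of fun i p => (A ^ (p.1 : ℕ) * B) i p.2

/-- The observability matrix of depth `ℓ`: the block matrix `[C; CA; …; CA^{ℓ-1}]`. -/
def obsMat {n ny : ℕ} (A : Matrix (Fin n) (Fin n) ℝ) (C : Matrix (Fin ny) (Fin n) ℝ)
    (ℓ : ℕ) : Matrix (Fin ℓ × Fin ny) (Fin n) ℝ :=
  Matrix.of fun p j => (C * A ^ (p.1 : ℕ)) p.2 j


/-! ### Auxiliary lemmas -/

section Aux

open Finset

set_option linter.unusedSectionVars false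

variable {α β γ δ : Type*} [Fintype α] [Fintype β] [Fintype γ] [Fintype δ]
  [DecidableEq α] [DecidableEq β] [DecidableEq γ] [DecidableEq δ]


variable {α β γ δ : Type*} [Fintype α] [Fintype β] [Fintype γ] [Fintype δ]
  [DecidableEq α] [DecidableEq β] [DecidableEq γ] [DecidableEq δ]

lemma rank_eq_card_of_vecMul_inj (M : Matrix α β ℝ)
    (h : ∀ v, v ᵥ* M = 0 → v = 0) : M.rank = Fintype.card α := by
  have hker : LinearMap.ker Mᵀ.mulVecLin = ⊥ := by
    rw [LinearMap.ker_eq_bot']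
    intro v hv
    exact h v (by rwa [Matrix.mulVecLin_apply, Matrix.mulVec_transpose] at hv)
  have := LinearMap.finrank_range_add_finrank_ker Mᵀ.mulVecLin
  rw [hker, finrank_bot, add_zero, Module.finrank_pi] at this
  rw [← Matrix.rank_transpose, Matrix.rank, this]

lemma vecMul_eq_zero_of_rank_rows (M : Matrix α β ℝ) (h : M.rank = Fintype.card α)
    {v : α → ℝ} (hv : v ᵥ* M = 0) : v = 0 := by
  have hker : LinearMap.ker Mᵀ.mulVecLin = ⊥ := by
    have h1 : Mᵀ.rank = Fintype.card α := by rw [Matrix.rank_transpose]; exact h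
    have h2 := LinearMap.finrank_range_add_finrank_ker Mᵀ.mulVecLin
    rw [← Matrix.rank, h1, Module.finrank_pi] at h2
    have : Module.finrank ℝ (LinearMap.ker Mᵀ.mulVecLin) = 0 := by omega
    exact Submodule.finrank_eq_zero.mp this
  have : v ∈ LinearMap.ker Mᵀ.mulVecLin := by
    rw [LinearMap.mem_ker, Matrix.mulVecLin_apply, Matrix.mulVec_transpose]; exact hv
  rwa [hker, Submodule.mem_bot] at this

lemma exists_mulVec_of_rank_rows (M : Matrix α β ℝ) (h : M.rank = Fintype.card α)
    (w : α → ℝ) : ∃ g, M *ᵥ g = w := by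
  have : LinearMap.range M.mulVecLin = ⊤ := by
    apply Submodule.eq_top_of_finrank_eq
    rw [← Matrix.rank, h, Module.finrank_pi]
  have hw : w ∈ LinearMap.range M.mulVecLin := this ▸ Submodule.mem_top
  obtain ⟨g, hg⟩ := hw
  exact ⟨g, hg⟩

lemma rank_mul_of_rank_rows (M : Matrix α β ℝ) (P : Matrix β γ ℝ)
    (h : P.rank = Fintype.card β) : (M * P).rank = M.rank := by
  have hsur : LinearMap.range P.mulVecLin = ⊤ := by
    apply Submodule.eq_top_of_finrank_eq
    rw [← Matrix.rank, h, Module.finrank_pi]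
  rw [Matrix.rank, Matrix.mulVecLin_mul, LinearMap.range_comp_of_range_eq_top _ hsur,
    ← Matrix.rank]


/-- extension-by-zero on the left coordinates as a linear map -/
def inlExt (α β : Type*) : (α → ℝ) →ₗ[ℝ] (α ⊕ β → ℝ) where
  toFun v := Sum.elim v 0
  map_add' v w := by funext s; cases s <;> simp
  map_smul' c v := by funext s; cases s <;> simp

def inrExt (α β : Type*) : (β → ℝ) →ₗ[ℝ] (α ⊕ β → ℝ) where
  toFun v := Sum.elim 0 v
  map_add' v w := by funext s; cases s <;> simp
  map_smul' c v := by funext s; cases s <;> simp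

lemma inlExt_inj {α β : Type*} : Function.Injective (inlExt α β) := by
  intro v w h; funext a; exact congrFun h (Sum.inl a)

lemma inrExt_inj {α β : Type*} : Function.Injective (inrExt α β) := by
  intro v w h; funext b; exact congrFun h (Sum.inr b)

lemma rank_fromBlocks_diag (A : Matrix α β ℝ) (D : Matrix γ δ ℝ) :
    (fromBlocks A 0 0 D).rank = A.rank + D.rank := by
  classical
  set M := fromBlocks A 0 0 D with hM
  set P := (LinearMap.range A.mulVecLin).map (inlExt α γ) with hP
  set Q := (LinearMap.range D.mulVecLin).map (inrExt α γ) with hQ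
  have hmv : ∀ x : β ⊕ δ → ℝ, M *ᵥ x = Sum.elim (A *ᵥ (x ∘ Sum.inl)) (D *ᵥ (x ∘ Sum.inr)) := by
    intro x
    rw [hM, fromBlocks_mulVec]
    simp
  have hrange : LinearMap.range M.mulVecLin = P ⊔ Q := by
    apply le_antisymm
    · rintro _ ⟨x, rfl⟩
      rw [Matrix.mulVecLin_apply, hmv]
      have : Sum.elim (A *ᵥ (x ∘ Sum.inl)) (D *ᵥ (x ∘ Sum.inr)) =
          inlExt α γ (A *ᵥ (x ∘ Sum.inl)) + inrExt α γ (D *ᵥ (x ∘ Sum.inr)) := by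
        funext s; cases s <;> simp [inlExt, inrExt]
      rw [this]
      exact Submodule.add_mem_sup
        (Submodule.mem_map_of_mem ⟨_, rfl⟩) (Submodule.mem_map_of_mem ⟨_, rfl⟩)
    · apply sup_le
      · rintro _ ⟨_, ⟨v, rfl⟩, rfl⟩
        refine ⟨Sum.elim v 0, ?_⟩
        rw [Matrix.mulVecLin_apply, hmv]
        funext s; cases s <;> simp [inlExt]
      · rintro _ ⟨_, ⟨v, rfl⟩, rfl⟩
        refine ⟨Sum.elim 0 v, ?_⟩
        rw [Matrix.mulVecLin_apply, hmv]
        funext s; cases s <;> simp [inrExt]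
  have hinf : P ⊓ Q = ⊥ := by
    rw [eq_bot_iff]
    rintro z ⟨⟨_, ⟨v, rfl⟩, hz1⟩, ⟨_, ⟨w, rfl⟩, hz2⟩⟩
    have h1 : ∀ b, z (Sum.inr b) = 0 := by
      intro b; rw [← hz1]; simp [inlExt]
    have h2 : ∀ a, z (Sum.inl a) = 0 := by
      intro a; rw [← hz2]; simp [inrExt]
    have : z = 0 := by funext s; cases s with
      | inl a => exact h2 a
      | inr b => exact h1 b
    simp [this]
  have hfin := Submodule.finrank_sup_add_finrank_inf_eq P Q
  rw [hinf, finrank_bot, add_zero] at hfin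
  have hPfin : Module.finrank ℝ P = A.rank := by
    rw [hP, Matrix.rank]
    exact (LinearEquiv.finrank_eq
      ((LinearMap.range A.mulVecLin).equivMapOfInjective _ inlExt_inj)).symm
  have hQfin : Module.finrank ℝ Q = D.rank := by
    rw [hQ, Matrix.rank]
    exact (LinearEquiv.finrank_eq
      ((LinearMap.range D.mulVecLin).equivMapOfInjective _ inrExt_inj)).symm
  rw [Matrix.rank, hrange, hfin, hPfin, hQfin]

end Aux

section Aux2
open Finset
set_option linter.unusedSectionVars false


lemma state_formula {n nu : ℕ} (A : Matrix (Fin n) (Fin n) ℝ) (B : Matrix (Fin n) (Fin nu) ℝ)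
    (z : ℕ → Fin n → ℝ) (u : ℕ → Fin nu → ℝ) (T : ℕ)
    (hz : ∀ t, t < T → z (t + 1) = A *ᵥ (z t) + B *ᵥ (u t)) :
    ∀ t, t ≤ T → z t = (A ^ t) *ᵥ (z 0) + ∑ s ∈ range t, ((A ^ (t - 1 - s)) * B) *ᵥ (u s) := by
  intro t
  induction t with
  | zero => intro _; simp
  | succ t ih =>
    intro ht
    rw [hz t (by omega), ih (by omega)]
    rw [Matrix.mulVec_add]
    have h1 : A *ᵥ ((A ^ t) *ᵥ (z 0)) = (A ^ (t+1)) *ᵥ (z 0) := by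
      rw [Matrix.mulVec_mulVec, ← pow_succ']
    have h2 : A *ᵥ (∑ s ∈ range t, ((A ^ (t - 1 - s)) * B) *ᵥ (u s))
        = ∑ s ∈ range t, ((A ^ (t - s)) * B) *ᵥ (u s) := by
      have hms := map_sum A.mulVecLin (fun s => ((A ^ (t - 1 - s)) * B) *ᵥ (u s)) (range t)
      simp only [Matrix.mulVecLin_apply] at hms
      rw [hms]
      apply Finset.sum_congr rfl
      intro s hs
      rw [Finset.mem_range] at hs
      have he : t - s = (t - 1 - s) + 1 := by omega
      rw [Matrix.mulVec_mulVec, ← Matrix.mul_assoc, he, pow_succ']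
    rw [h1, h2, Finset.sum_range_succ]
    simp only [Nat.add_sub_cancel, Nat.sub_self, pow_zero, Matrix.one_mul]
    abel

lemma cayley_sum {n : ℕ} (A : Matrix (Fin n) (Fin n) ℝ) :
    ∑ t ∈ range (n + 1), (A.charpoly.coeff t) • A ^ t = 0 ∧ A.charpoly.coeff n = 1 := by
  constructor
  · have h := Matrix.aeval_self_charpoly A
    rw [Polynomial.aeval_eq_sum_range] at h
    rwa [Matrix.charpoly_natDegree_eq_dim, Fintype.card_fin] at h
  · have h := (Matrix.charpoly_monic A).coeff_natDegree
    rwa [Matrix.charpoly_natDegree_eq_dim, Fintype.card_fin] at h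

lemma mulVec_sum_smul {q r : ℕ} {ι : Type*} (M : Matrix (Fin q) (Fin r) ℝ) (s : Finset ι)
    (c : ι → ℝ) (f : ι → Fin r → ℝ) :
    M *ᵥ (∑ i ∈ s, c i • f i) = ∑ i ∈ s, c i • (M *ᵥ f i) := by
  rw [show M *ᵥ (∑ i ∈ s, c i • f i) = M.mulVecLin (∑ i ∈ s, c i • f i) from rfl, map_sum]
  simp only [_root_.map_smul, Matrix.mulVecLin_apply]

lemma eta_dot {n q : ℕ} (η : Fin n → ℝ) (M : Matrix (Fin n) (Fin q) ℝ) (z : Fin q → ℝ) :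
    ∑ i, η i * (M *ᵥ z) i = ∑ a, (∑ k, η k * M k a) * z a := by
  simp only [Matrix.mulVec, dotProduct, Finset.mul_sum, Finset.sum_mul]
  rw [Finset.sum_comm]
  apply Finset.sum_congr rfl
  intro a _
  apply Finset.sum_congr rfl
  intro k _
  ring

set_option maxHeartbeats 1000000 in
lemma key_rank {n nu : ℕ} (A : Matrix (Fin n) (Fin n) ℝ) (B : Matrix (Fin n) (Fin nu) ℝ)
    (hctrb : (ctrbMat A B).rank = n)
    (N : ℕ) (ud : ℕ → Fin nu → ℝ) (x : ℕ → Fin n → ℝ)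
    (hx : ∀ t, t + 1 < N → x (t + 1) = A.mulVec (x t) + B.mulVec (ud t))
    (ℓ : ℕ) (hℓ : 1 ≤ ℓ) (hN : ℓ + n ≤ N)
    (hPE : (hankel (ℓ + n) (N - (ℓ + n) + 1) ud).rank = (ℓ + n) * nu) :
    (Matrix.fromRows (hankel ℓ (N - ℓ + 1) ud)
      (Matrix.of fun i (j : Fin (N - ℓ + 1)) => x (j : ℕ) i)).rank = ℓ * nu + n := by
  have hinj : ∀ v, v ᵥ* (Matrix.fromRows (hankel ℓ (N - ℓ + 1) ud)
      (Matrix.of fun i (j : Fin (N - ℓ + 1)) => x (j : ℕ) i)) = 0 → v = 0 := by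
    intro v hv
    set ξ : Fin ℓ × Fin nu → ℝ := fun p => v (Sum.inl p) with hξdef
    set η : Fin n → ℝ := fun i => v (Sum.inr i) with hηdef
    -- the column relations
    have hcol : ∀ j : Fin (N - ℓ + 1),
        (∑ p : Fin ℓ × Fin nu, ξ p * ud ((p.1 : ℕ) + (j : ℕ)) p.2)
          + ∑ i, η i * x (j : ℕ) i = 0 := by
      intro j
      have h := congrFun hv j
      simpa [Matrix.vecMul, dotProduct, Fintype.sum_sum_type,
        Matrix.fromRows_apply_inl, Matrix.fromRows_apply_inr, hankel, hξdef, hηdef,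
        Sum.elim_inl, Sum.elim_inr] using h
    -- persistency of excitation: surjectivity
    have hsur : ∀ w : Fin (ℓ + n) × Fin nu → ℝ, ∃ g : Fin (N - (ℓ + n) + 1) → ℝ,
        ∀ q : Fin (ℓ + n) × Fin nu,
          ∑ j : Fin (N - (ℓ + n) + 1), ud ((q.1 : ℕ) + (j : ℕ)) q.2 * g j = w q := by
      intro w
      obtain ⟨g, hg⟩ := exists_mulVec_of_rank_rows (hankel (ℓ + n) (N - (ℓ + n) + 1) ud)
        (by rw [hPE]; simp) w
      refine ⟨g, fun q => ?_⟩
      have := congrFun hg q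
      simpa [Matrix.mulVec, dotProduct, hankel] using this
    obtain ⟨hCH, hcn⟩ := cayley_sum A
    set c : ℕ → ℝ := fun t => A.charpoly.coeff t with hcdef
    -- central functional identity
    have hF : ∀ ub : ℕ → Fin nu → ℝ,
        ∑ t ∈ range (n + 1), c t *
          ((∑ p : Fin ℓ × Fin nu, ξ p * ub ((p.1 : ℕ) + t) p.2)
            + ∑ s ∈ range t, ∑ a, (∑ k, η k * ((A ^ (t - 1 - s)) * B) k a) * ub s a) = 0 := by
      intro ub
      obtain ⟨g, hg⟩ := hsur (fun q => ub (q.1 : ℕ) q.2)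
      set xb : ℕ → Fin n → ℝ :=
        fun t => ∑ j : Fin (N - (ℓ + n) + 1), g j • x (t + (j : ℕ)) with hxbdef
      have hub : ∀ t : ℕ, t < ℓ + n → ∀ a : Fin nu,
          (∑ j : Fin (N - (ℓ + n) + 1), g j * ud (t + (j : ℕ)) a) = ub t a := by
        intro t ht a
        have h := hg (⟨t, ht⟩, a)
        simpa [mul_comm] using h
      have hxbrec : ∀ t, t < n → xb (t + 1) = A *ᵥ (xb t) + B *ᵥ (ub t) := by
        intro t ht
        have h1 : xb (t + 1) = ∑ j : Fin (N - (ℓ + n) + 1),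
            g j • (A *ᵥ x (t + (j : ℕ)) + B *ᵥ ud (t + (j : ℕ))) := by
          rw [hxbdef]
          apply Finset.sum_congr rfl
          intro j _
          rw [show t + 1 + (j : ℕ) = (t + (j : ℕ)) + 1 from by omega,
            hx (t + (j : ℕ)) (by have := j.isLt; omega)]
        have hA : A *ᵥ (xb t) = ∑ j : Fin (N - (ℓ + n) + 1), g j • (A *ᵥ x (t + (j : ℕ))) := by
          rw [hxbdef, mulVec_sum_smul]
        have hBu : (∑ j : Fin (N - (ℓ + n) + 1), g j • (B *ᵥ ud (t + (j : ℕ))))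
            = B *ᵥ (fun a => ∑ j : Fin (N - (ℓ + n) + 1), g j * ud (t + (j : ℕ)) a) := by
          have h2 : (fun a => ∑ j : Fin (N - (ℓ + n) + 1), g j * ud (t + (j : ℕ)) a)
              = ∑ j : Fin (N - (ℓ + n) + 1), g j • ud (t + (j : ℕ)) := by
            funext a
            simp [Finset.sum_apply]
          rw [h2, mulVec_sum_smul]
        have hB : B *ᵥ (ub t) = ∑ j : Fin (N - (ℓ + n) + 1), g j • (B *ᵥ ud (t + (j : ℕ))) := by
          have h2 : ub t = fun a => ∑ j : Fin (N - (ℓ + n) + 1), g j * ud (t + (j : ℕ)) a :=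
            funext fun a => (hub t (by omega) a).symm
          rw [h2, ← hBu]
        rw [h1, hA, hB, ← Finset.sum_add_distrib]
        apply Finset.sum_congr rfl
        intro j _
        rw [smul_add]
      have hstate := state_formula A B xb ub n hxbrec
      have hrel : ∀ t : ℕ, t ≤ n →
          (∑ p : Fin ℓ × Fin nu, ξ p * ub ((p.1 : ℕ) + t) p.2) + ∑ i, η i * xb t i = 0 := by
        intro t ht
        have h0 : ∑ j : Fin (N - (ℓ + n) + 1), g j *
            ((∑ p : Fin ℓ × Fin nu, ξ p * ud ((p.1 : ℕ) + (t + (j : ℕ))) p.2)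
              + ∑ i, η i * x (t + (j : ℕ)) i) = 0 := by
          apply Finset.sum_eq_zero
          intro j _
          have hj : t + (j : ℕ) < N - ℓ + 1 := by have := j.isLt; omega
          have h := hcol ⟨t + (j : ℕ), hj⟩
          simp only [Fin.val_mk] at h
          rw [h, mul_zero]
        rw [← h0]
        have ha : ∀ j : Fin (N - (ℓ + n) + 1),
            g j * (∑ p : Fin ℓ × Fin nu, ξ p * ud ((p.1 : ℕ) + (t + (j : ℕ))) p.2)
            = ∑ p : Fin ℓ × Fin nu, g j * (ξ p * ud (((p.1 : ℕ) + t) + (j : ℕ)) p.2) := by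
          intro j
          rw [Finset.mul_sum]
          apply Finset.sum_congr rfl
          intro p _
          rw [show (p.1 : ℕ) + (t + (j : ℕ)) = ((p.1 : ℕ) + t) + (j : ℕ) from by omega]
        calc (∑ p : Fin ℓ × Fin nu, ξ p * ub ((p.1 : ℕ) + t) p.2) + ∑ i, η i * xb t i
            = (∑ p : Fin ℓ × Fin nu, ∑ j : Fin (N - (ℓ + n) + 1),
                g j * (ξ p * ud (((p.1 : ℕ) + t) + (j : ℕ)) p.2))
              + ∑ i, ∑ j : Fin (N - (ℓ + n) + 1), g j * (η i * x (t + (j : ℕ)) i) := by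
              congr 1
              · apply Finset.sum_congr rfl
                intro p _
                rw [← hub ((p.1 : ℕ) + t) (by have := p.1.isLt; omega) p.2, Finset.mul_sum]
                apply Finset.sum_congr rfl
                intro j _
                ring
              · apply Finset.sum_congr rfl
                intro i _
                rw [hxbdef]
                simp only [Finset.sum_apply, Pi.smul_apply, smul_eq_mul, Finset.mul_sum]
                apply Finset.sum_congr rfl
                intro j _
                ring
          _ = ∑ j : Fin (N - (ℓ + n) + 1), g j *
              ((∑ p : Fin ℓ × Fin nu, ξ p * ud ((p.1 : ℕ) + (t + (j : ℕ))) p.2)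
                + ∑ i, η i * x (t + (j : ℕ)) i) := by
              rw [Finset.sum_comm, Finset.sum_comm (γ := Fin n)]
              rw [← Finset.sum_add_distrib]
              apply Finset.sum_congr rfl
              intro j _
              rw [mul_add, ha j, Finset.mul_sum]
      have hbr : ∀ t, t ≤ n →
          c t * ((∑ p : Fin ℓ × Fin nu, ξ p * ub ((p.1 : ℕ) + t) p.2)
            + ∑ s ∈ range t, ∑ a, (∑ k, η k * ((A ^ (t - 1 - s)) * B) k a) * ub s a)
          = -(c t * ∑ a, (∑ k, η k * (A ^ t) k a) * xb 0 a) := by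
        intro t ht
        have h2 : ∑ s ∈ range t, ∑ a, (∑ k, η k * ((A ^ (t - 1 - s)) * B) k a) * ub s a
            = ∑ i, η i * xb t i - ∑ a, (∑ k, η k * (A ^ t) k a) * xb 0 a := by
          rw [eq_sub_iff_add_eq, ← eta_dot η (A ^ t) (xb 0)]
          have h3 : ∑ i, η i * xb t i
              = ∑ i, η i * ((A ^ t) *ᵥ (xb 0)) i
                + ∑ s ∈ range t, ∑ i, η i * (((A ^ (t - 1 - s)) * B) *ᵥ (ub s)) i := by
            rw [show ∑ s ∈ range t, ∑ i, η i * (((A ^ (t - 1 - s)) * B) *ᵥ (ub s)) i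
                = ∑ i, ∑ s ∈ range t, η i * (((A ^ (t - 1 - s)) * B) *ᵥ (ub s)) i from
                Finset.sum_comm, ← Finset.sum_add_distrib]
            apply Finset.sum_congr rfl
            intro i _
            rw [hstate t ht]
            simp only [Pi.add_apply, Finset.sum_apply, mul_add, Finset.mul_sum]
          rw [h3]
          have h4 : ∀ s ∈ range t, ∑ i, η i * (((A ^ (t - 1 - s)) * B) *ᵥ (ub s)) i
              = ∑ a, (∑ k, η k * ((A ^ (t - 1 - s)) * B) k a) * ub s a := by
            intro s _
            exact eta_dot η _ (ub s)
          rw [Finset.sum_congr rfl h4]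
          ring
        rw [h2]
        linear_combination (c t) * hrel t ht
      have hzero : ∀ (k i : Fin n), (∑ t ∈ range (n + 1), c t * (A ^ t) k i) = 0 := by
        intro k i
        have h := congrFun (congrFun hCH k) i
        simpa [Matrix.sum_apply] using h
      rw [Finset.sum_congr rfl (fun t ht => hbr t (by have := Finset.mem_range.mp ht; omega))]
      have hre : ∀ t ∈ range (n + 1),
          -(c t * ∑ a, (∑ k, η k * (A ^ t) k a) * xb 0 a)
          = ∑ a, ∑ k, -(η k * xb 0 a * (c t * (A ^ t) k a)) := by
        intro t _
        rw [Finset.mul_sum, ← Finset.sum_neg_distrib]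
        apply Finset.sum_congr rfl
        intro a _
        rw [Finset.sum_mul, Finset.mul_sum, ← Finset.sum_neg_distrib]
        apply Finset.sum_congr rfl
        intro k _
        ring
      rw [Finset.sum_congr rfl hre, Finset.sum_comm]
      apply Finset.sum_eq_zero
      intro a _
      rw [Finset.sum_comm]
      apply Finset.sum_eq_zero
      intro k _
      have : ∀ t ∈ range (n + 1), -(η k * xb 0 a * (c t * (A ^ t) k a))
          = (-(η k * xb 0 a)) * (c t * (A ^ t) k a) := by
        intro t _
        ring
      rw [Finset.sum_congr rfl this, ← Finset.mul_sum, hzero k a, mul_zero]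
    -- coefficient equations
    have E1 : ∀ (r : ℕ), r < ℓ + n → ∀ (a : Fin nu),
        ∑ t ∈ range (n + 1), c t *
          ((if h : t ≤ r ∧ r - t < ℓ then ξ (⟨r - t, h.2⟩, a) else 0)
            + (if r < t then ∑ k, η k * ((A ^ (t - 1 - r)) * B) k a else 0)) = 0 := by
      intro r hr a
      have hFr := hF (fun s b => if s = r ∧ b = a then (1 : ℝ) else 0)
      have heq : ∀ t ∈ range (n + 1),
          c t * ((if h : t ≤ r ∧ r - t < ℓ then ξ (⟨r - t, h.2⟩, a) else 0)
            + (if r < t then ∑ k, η k * ((A ^ (t - 1 - r)) * B) k a else 0))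
          = c t * ((∑ p : Fin ℓ × Fin nu, ξ p *
              (if ((p.1 : ℕ) + t) = r ∧ p.2 = a then (1 : ℝ) else 0))
            + ∑ s ∈ range t, ∑ b, (∑ k, η k * ((A ^ (t - 1 - s)) * B) k b) *
              (if s = r ∧ b = a then (1 : ℝ) else 0)) := by
        intro t _
        congr 1
        congr 1
        · by_cases h : t ≤ r ∧ r - t < ℓ
          · rw [dif_pos h]
            rw [Finset.sum_eq_single ((⟨r - t, h.2⟩ : Fin ℓ), a)]
            · rw [if_pos (by constructor <;> simp [Fin.val_mk] <;> omega), mul_one]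
            · intro p _ hp
              rw [if_neg, mul_zero]
              rintro ⟨h1, h2⟩
              apply hp
              have : (p.1 : ℕ) = r - t := by omega
              ext
              · exact this
              · exact congrArg Fin.val h2
            · intro h'
              exact absurd (Finset.mem_univ _) h'
          · rw [dif_neg h]
            symm
            apply Finset.sum_eq_zero
            intro p _
            rw [if_neg, mul_zero]
            rintro ⟨h1, h2⟩
            exact h ⟨by omega, by have := p.1.isLt; omega⟩
        · have hinner : ∀ s ∈ range t,
              ∑ b, (∑ k, η k * ((A ^ (t - 1 - s)) * B) k b) *
                (if s = r ∧ b = a then (1 : ℝ) else 0)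
              = if s = r then ∑ k, η k * ((A ^ (t - 1 - s)) * B) k a else 0 := by
            intro s _
            by_cases hs : s = r
            · rw [if_pos hs]
              rw [Finset.sum_eq_single a]
              · rw [if_pos ⟨hs, rfl⟩, mul_one]
              · intro b _ hb
                rw [if_neg (by rintro ⟨_, h2⟩; exact hb h2), mul_zero]
              · intro h'
                exact absurd (Finset.mem_univ _) h'
            · rw [if_neg hs]
              apply Finset.sum_eq_zero
              intro b _
              rw [if_neg (by rintro ⟨h1, _⟩; exact hs h1), mul_zero]
          rw [Finset.sum_congr rfl hinner]
          by_cases hrt : r < t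
          · rw [if_pos hrt, Finset.sum_ite_eq' (range t) r
              (fun s => ∑ k, η k * ((A ^ (t - 1 - s)) * B) k a),
              if_pos (Finset.mem_range.mpr hrt)]
          · rw [if_neg hrt, Finset.sum_ite_eq' (range t) r
              (fun s => ∑ k, η k * ((A ^ (t - 1 - s)) * B) k a),
              if_neg (by rw [Finset.mem_range]; omega)]
      rw [Finset.sum_congr rfl heq]
      exact hFr
    -- Stage 1: ξ = 0
    have hxi : ∀ d : ℕ, ∀ p : Fin ℓ × Fin nu, ℓ - 1 - (p.1 : ℕ) = d → ξ p = 0 := by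
      intro d
      induction d using Nat.strong_induction_on with
      | _ d IH =>
        intro p hp
        have hp1 := p.1.isLt
        have hE := E1 (n + (p.1 : ℕ)) (by omega) p.2
        rw [Finset.sum_eq_single n] at hE
        · rw [dif_pos (by constructor <;> omega)] at hE
          rw [if_neg (by omega), add_zero, show c n = (1:ℝ) from hcn, one_mul] at hE
          have h2 : (⟨n + (p.1 : ℕ) - n, by omega⟩ : Fin ℓ) = p.1 := by
            apply Fin.ext
            simp only [Fin.val_mk]
            omega
          rw [← Prod.mk.eta (p := p), ← h2]
          exact hE
        · intro t htr htn
          rw [Finset.mem_range] at htr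
          have htlt : t < n := by omega
          rw [if_neg (by omega), add_zero]
          by_cases h : t ≤ n + (p.1 : ℕ) ∧ n + (p.1 : ℕ) - t < ℓ
          · rw [dif_pos h]
            rw [IH (ℓ - 1 - (n + (p.1 : ℕ) - t)) (by omega) _ (by simp [Fin.val_mk]), mul_zero]
          · rw [dif_neg h, mul_zero]
        · intro hn
          exact absurd (Finset.self_mem_range_succ n) hn
    have hxiall : ∀ p : Fin ℓ × Fin nu, ξ p = 0 := fun p => hxi (ℓ - 1 - (p.1 : ℕ)) p rfl
    -- Stage 2: η annihilates the controllability matrix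
    have heta : ∀ k : ℕ, k < n → ∀ a : Fin nu, (∑ kk, η kk * ((A ^ k) * B) kk a) = 0 := by
      intro k
      induction k using Nat.strong_induction_on with
      | _ k IH =>
        intro hk a
        have hE := E1 (n - 1 - k) (by omega) a
        rw [Finset.sum_eq_single n] at hE
        · rw [if_pos (by omega), show c n = (1:ℝ) from hcn, one_mul] at hE
          have hd : ∀ h : n ≤ n - 1 - k ∧ n - 1 - k - n < ℓ,
              ξ (⟨n - 1 - k - n, h.2⟩, a) = 0 := fun h => hxiall _
          rw [show (if h : n ≤ n - 1 - k ∧ n - 1 - k - n < ℓ then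
              ξ (⟨n - 1 - k - n, h.2⟩, a) else 0) = 0 from by
              split
              · exact hxiall _
              · rfl, zero_add] at hE
          rwa [show n - 1 - (n - 1 - k) = k from by omega] at hE
        · intro t htr htn
          rw [Finset.mem_range] at htr
          have htlt : t < n := by omega
          rw [show (if h : t ≤ n - 1 - k ∧ n - 1 - k - t < ℓ then
              ξ (⟨n - 1 - k - t, h.2⟩, a) else 0) = 0 from by
              split
              · exact hxiall _
              · rfl, zero_add]
          by_cases h : n - 1 - k < t
          · rw [if_pos h]
            rw [IH (t - 1 - (n - 1 - k)) (by omega) (by omega) a, mul_zero]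
          · rw [if_neg h, mul_zero]
        · intro hn
          exact absurd (Finset.self_mem_range_succ n) hn
    have hetav : η ᵥ* (ctrbMat A B) = 0 := by
      funext p
      have := heta (p.1 : ℕ) p.1.isLt p.2
      simpa [Matrix.vecMul, dotProduct, ctrbMat] using this
    have heta0 : η = 0 :=
      vecMul_eq_zero_of_rank_rows (ctrbMat A B) (by rw [hctrb, Fintype.card_fin]) hetav
    funext r
    cases r with
    | inl p => exact hxiall p
    | inr i => exact congrFun heta0 i
  rw [rank_eq_card_of_vecMul_inj _ hinj]
  simp [mul_comm]


end Aux2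

open Finset in
set_option maxHeartbeats 1000000 in
/-- If `(A, B)` is controllable, `(u^d, y^d)` is a trajectory of length `N`, and `u^d` is
persistently exciting of order `ℓ + n`, then the stacked Hankel matrix
`[H_ℓ(u^d); H_ℓ(y^d)]` has rank `ℓ n_u + rank O_ℓ`. -/
theorem stacked_hankel_rank {n nu ny : ℕ}
    (A : Matrix (Fin n) (Fin n) ℝ) (B : Matrix (Fin n) (Fin nu) ℝ)
    (C : Matrix (Fin ny) (Fin n) ℝ) (D : Matrix (Fin ny) (Fin nu) ℝ)
    (hctrb : (ctrbMat A B).rank = n)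
    (N : ℕ) (ud : ℕ → Fin nu → ℝ) (yd : ℕ → Fin ny → ℝ)
    (hdata : IsTrajectory A B C D N ud yd)
    (ℓ : ℕ) (hℓ : 1 ≤ ℓ) (hℓN : ℓ ≤ N)
    (hPE : (hankel (ℓ + n) (N - (ℓ + n) + 1) ud).rank = (ℓ + n) * nu) :
    (Matrix.fromRows (hankel ℓ (N - ℓ + 1) ud) (hankel ℓ (N - ℓ + 1) yd)).rank
      = ℓ * nu + (obsMat A C ℓ).rank := by
  obtain ⟨x, hx, hy⟩ := hdata
  have hN : ℓ + n ≤ N := by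
    rcases Nat.eq_zero_or_pos nu with h0 | hpos
    · have h1 := Matrix.rank_le_card_width (ctrbMat A B)
      rw [hctrb] at h1
      subst h0
      simp at h1
      omega
    · have h1 := Matrix.rank_le_card_width (hankel (ℓ + n) (N - (ℓ + n) + 1) ud)
      rw [hPE, Fintype.card_fin] at h1
      have h2 : ℓ + n ≤ (ℓ + n) * nu := Nat.le_mul_of_pos_right _ hpos
      omega
  set X : Matrix (Fin n) (Fin (N - ℓ + 1)) ℝ := Matrix.of fun i j => x (j : ℕ) i with hXdef
  set T : Matrix (Fin ℓ × Fin ny) (Fin ℓ × Fin nu) ℝ := Matrix.of fun p q =>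
    if (q.1 : ℕ) < (p.1 : ℕ) then (C * A ^ ((p.1 : ℕ) - 1 - (q.1 : ℕ)) * B) p.2 q.2
    else if (q.1 : ℕ) = (p.1 : ℕ) then D p.2 q.2 else 0 with hTdef
  -- the output Hankel matrix factors
  have hHy : hankel ℓ (N - ℓ + 1) yd = T * hankel ℓ (N - ℓ + 1) ud + obsMat A C ℓ * X := by
    ext p j
    have hp1 := p.1.isLt
    have hj := j.isLt
    have hxx : x ((p.1 : ℕ) + (j : ℕ)) = (A ^ (p.1 : ℕ)) *ᵥ x (j : ℕ)
        + ∑ s ∈ range (p.1 : ℕ), ((A ^ ((p.1 : ℕ) - 1 - s)) * B) *ᵥ ud ((j : ℕ) + s) := by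
      have hz := state_formula A B (fun t => x ((j : ℕ) + t)) (fun t => ud ((j : ℕ) + t))
        (ℓ - 1) (fun t ht => hx ((j : ℕ) + t) (by omega)) (p.1 : ℕ) (by omega)
      rw [show (p.1 : ℕ) + (j : ℕ) = (j : ℕ) + (p.1 : ℕ) from by omega]
      simpa using hz
    have hOX : (obsMat A C ℓ * X) p j = ((C * A ^ (p.1 : ℕ)) *ᵥ x (j : ℕ)) p.2 := by
      simp [Matrix.mul_apply, Matrix.mulVec, dotProduct, obsMat, hXdef]
    have hTH : (T * hankel ℓ (N - ℓ + 1) ud) p j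
        = (∑ s ∈ range (p.1 : ℕ), ((C * A ^ ((p.1 : ℕ) - 1 - s) * B) *ᵥ ud ((j : ℕ) + s)) p.2)
          + (D *ᵥ ud ((p.1 : ℕ) + (j : ℕ))) p.2 := by
      rw [Matrix.mul_apply, Fintype.sum_prod_type]
      rw [show ∑ k : Fin ℓ, ∑ a : Fin nu, T p (k, a) * hankel ℓ (N - ℓ + 1) ud (k, a) j
          = ∑ k ∈ range ℓ, ∑ a : Fin nu,
            (if k < (p.1 : ℕ) then (C * A ^ ((p.1 : ℕ) - 1 - k) * B) p.2 a
              else if k = (p.1 : ℕ) then D p.2 a else 0) * ud (k + (j : ℕ)) a from by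
        rw [← Fin.sum_univ_eq_sum_range]
        apply Finset.sum_congr rfl
        intro k _
        rfl]
      rw [← Finset.sum_subset (Finset.range_subset_range.mpr (show (p.1 : ℕ) + 1 ≤ ℓ from by omega))
        (by
          intro k hk hk2
          rw [Finset.mem_range] at hk
          rw [Finset.mem_range] at hk2
          apply Finset.sum_eq_zero
          intro a _
          rw [if_neg (by omega), if_neg (by omega), zero_mul])]
      rw [Finset.sum_range_succ]
      congr 1
      · apply Finset.sum_congr rfl
        intro k hk
        rw [Finset.mem_range] at hk
        rw [show (j : ℕ) + k = k + (j : ℕ) from by omega]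
        simp only [Matrix.mulVec, dotProduct]
        apply Finset.sum_congr rfl
        intro a _
        rw [if_pos hk]
      · simp only [Matrix.mulVec, dotProduct]
        apply Finset.sum_congr rfl
        intro a _
        simp
    have hy' := hy ((p.1 : ℕ) + (j : ℕ)) (by omega)
    show yd ((p.1 : ℕ) + (j : ℕ)) p.2 = _
    rw [Matrix.add_apply, hOX, hTH, hy']
    rw [Pi.add_apply, hxx, Matrix.mulVec_add, Matrix.mulVec_mulVec]
    rw [show C *ᵥ (∑ s ∈ range (p.1 : ℕ), ((A ^ ((p.1 : ℕ) - 1 - s)) * B) *ᵥ ud ((j : ℕ) + s))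
        = ∑ s ∈ range (p.1 : ℕ), ((C * A ^ ((p.1 : ℕ) - 1 - s) * B) *ᵥ ud ((j : ℕ) + s)) from by
      rw [show C *ᵥ (∑ s ∈ range (p.1 : ℕ), ((A ^ ((p.1 : ℕ) - 1 - s)) * B) *ᵥ ud ((j : ℕ) + s))
          = C.mulVecLin (∑ s ∈ range (p.1 : ℕ), ((A ^ ((p.1 : ℕ) - 1 - s)) * B) *ᵥ ud ((j : ℕ) + s))
          from rfl, map_sum]
      apply Finset.sum_congr rfl
      intro s _
      simp only [Matrix.mulVecLin_apply, Matrix.mulVec_mulVec, Matrix.mul_assoc]]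
    rw [Pi.add_apply, Finset.sum_apply]
    ring
  have hfact : Matrix.fromRows (hankel ℓ (N - ℓ + 1) ud) (hankel ℓ (N - ℓ + 1) yd)
      = fromBlocks (1 : Matrix (Fin ℓ × Fin nu) (Fin ℓ × Fin nu) ℝ) 0 T (obsMat A C ℓ)
        * Matrix.fromRows (hankel ℓ (N - ℓ + 1) ud) X := by
    rw [fromBlocks_mul_fromRows, Matrix.one_mul, Matrix.zero_mul, add_zero, ← hHy]
  rw [hfact, rank_mul_of_rank_rows _ _ (by
    rw [key_rank A B hctrb N ud x hx ℓ hℓ hN hPE]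
    simp [mul_comm])]
  have hsplit : fromBlocks (1 : Matrix (Fin ℓ × Fin nu) (Fin ℓ × Fin nu) ℝ) 0 T (obsMat A C ℓ)
      = fromBlocks 1 0 T (1 : Matrix (Fin ℓ × Fin ny) (Fin ℓ × Fin ny) ℝ)
        * fromBlocks (1 : Matrix (Fin ℓ × Fin nu) (Fin ℓ × Fin nu) ℝ) 0 0 (obsMat A C ℓ) := by
    rw [Matrix.fromBlocks_multiply]
    simp
  rw [hsplit, Matrix.rank_mul_eq_right_of_isUnit_det _ _ (by
      rw [Matrix.det_fromBlocks_zero₁₂]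
      simp), rank_fromBlocks_diag, Matrix.rank_one]
  simp [mul_comm]
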